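/- Let β₀ > 0 and let (X_{k,j}), indexed by integers k ≥ 0 and 1 ≤ j ≤ 2^k, be real-valued random variables on a common probability space satisfying: (i) E[exp(β₀|X_{0,1}|)] < ∞ and E[X_{0,1}] = 0; (ii) for all (k,j), X_{k,j} has the same distribution as 2^{−k}·X_{0,1}; (iii) for each fixed k, the random variables (X_{k,j})_{1 ≤ j ≤ 2^k} are mutually independent. Then the partial sums S_n = ∑_{k=0}^{n} ∑_{j=1}^{2^k} X_{k,j} converge almost surely as n → ∞, and the limit X = ∑_{k=0}^{∞} ∑_{j=1}^{2^k} X_{k,j} satisfies E[exp(β X)] < ∞ for every β with |β| < β₀/2. -/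

import Mathlib

open MeasureTheory Real Filter

private theorem lemA (u : ℝ) : exp u ≤ 1 + u + u^2 * exp |u| := by
  rcases le_or_gt 0 u with h | h
  · rw [abs_of_nonneg h]
    rcases le_or_gt 1 u with h1 | h1
    · nlinarith [mul_nonneg (by nlinarith : (0:ℝ) ≤ u^2-1) (exp_pos u).le]
    · have h2 : 1 - u ≤ exp (-u) := by have := add_one_le_exp (-u); linarith
      have h3 : exp u * exp (-u) = 1 := by rw [← exp_add]; simp
      nlinarith [exp_pos u, exp_pos (-u), sq_nonneg u]
  · rw [abs_of_neg h]
    have h2 : 1 - u ≤ exp (-u) := by have := add_one_le_exp (-u); linarith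
    have h4 : 1 ≤ exp (-u) := by rw [Real.one_le_exp_iff]; linarith
    have h5 : exp u * exp (-u) = 1 := by rw [← exp_add]; simp
    have ha : exp u * (1 - u) ≤ 1 := by nlinarith [exp_pos u]
    have hb : exp u ≤ 1 + u + u^2 := by nlinarith [sq_nonneg u]
    nlinarith [sq_nonneg u]

private theorem lemB (x d : ℝ) (hd : 0 < d) : x^2 ≤ 4/d^2 * exp (d*|x|) := by
  have h : exp (d*|x|) = exp (d*|x|/2) * exp (d*|x|/2) := by rw [← exp_add]; ring_nf
  have h1 : d*|x|/2 + 1 ≤ exp (d*|x|/2) := add_one_le_exp _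
  have h2 : 0 ≤ d * |x| := by positivity
  have h3 : (d*|x|)^2 ≤ 4 * exp (d*|x|) := by nlinarith [exp_pos (d*|x|/2)]
  have h4 : d^2 * x^2 = (d*|x|)^2 := by rw [mul_pow, sq_abs]
  calc x^2 ≤ (4 * exp (d*|x|))/d^2 := (le_div_iff₀ (by positivity)).2 (by nlinarith)
    _ = 4/d^2 * exp (d*|x|) := by ring

private theorem lemInt {Ω : Type*} [MeasurableSpace Ω] (μ : Measure Ω) (β₀ : ℝ)
    (Z : Ω → ℝ) (hZm : Measurable Z) (hexp : Integrable (fun ω => exp (β₀*|Z ω|)) μ)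
    (t : ℝ) (ht : |t| ≤ β₀) : Integrable (fun ω => exp (t * Z ω)) μ := by
  refine hexp.mono' ((hZm.const_mul t).exp.aestronglyMeasurable)
    (Filter.Eventually.of_forall fun ω => ?_)
  rw [Real.norm_eq_abs, abs_of_pos (exp_pos _)]
  apply exp_le_exp.2
  calc t * Z ω ≤ |t * Z ω| := le_abs_self _
    _ = |t| * |Z ω| := abs_mul _ _
    _ ≤ β₀ * |Z ω| := mul_le_mul_of_nonneg_right ht (abs_nonneg _)

private theorem lemQuad {Ω : Type*} [MeasurableSpace Ω] (μ : Measure Ω) [IsProbabilityMeasure μ]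
    (β₀ : ℝ) (Z : Ω → ℝ) (hZm : Measurable Z)
    (hexp : Integrable (fun ω => exp (β₀*|Z ω|)) μ)
    (hint : Integrable Z μ) (hmean : ∫ ω, Z ω ∂μ = 0)
    (t d : ℝ) (hd : 0 < d) (htd : |t| + d ≤ β₀) :
    ∫ ω, exp (t * Z ω) ∂μ ≤ exp (t^2 * (4/d^2 * ∫ ω, exp (β₀*|Z ω|) ∂μ)) := by
  set M := ∫ ω, exp (β₀*|Z ω|) ∂μ with hM
  have hg : Integrable (fun ω => 1 + t * Z ω + t^2 * (4/d^2) * exp (β₀*|Z ω|)) μ :=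
    ((integrable_const 1).add (hint.const_mul t)).add (hexp.const_mul _)
  have hpt : ∀ ω, exp (t * Z ω) ≤ 1 + t * Z ω + t^2 * (4/d^2) * exp (β₀*|Z ω|) := by
    intro ω
    have h1 := lemA (t * Z ω)
    have h2 : exp |t * Z ω| ≤ exp (|t| * |Z ω|) := by rw [abs_mul]
    have h3 : (Z ω)^2 ≤ 4/d^2 * exp (d*|Z ω|) := lemB _ _ hd
    have h4 : exp (d*|Z ω|) * exp (|t| * |Z ω|) = exp ((d + |t|)*|Z ω|) := by
      rw [← exp_add]; ring_nf
    have h5 : exp ((d + |t|)*|Z ω|) ≤ exp (β₀*|Z ω|) := by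
      apply exp_le_exp.2; apply mul_le_mul_of_nonneg_right (by linarith) (abs_nonneg _)
    have h6 : (t * Z ω)^2 * exp |t * Z ω| ≤ t^2 * (4/d^2) * exp (β₀*|Z ω|) := by
      rw [mul_pow]
      calc t^2 * (Z ω)^2 * exp |t * Z ω|
          ≤ t^2 * (4/d^2 * exp (d*|Z ω|)) * exp (|t| * |Z ω|) := by
            apply mul_le_mul ?_ h2 (exp_pos _).le (by positivity)
            exact mul_le_mul_of_nonneg_left h3 (sq_nonneg t)
        _ = t^2 * (4/d^2) * (exp (d*|Z ω|) * exp (|t| * |Z ω|)) := by ring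
        _ ≤ t^2 * (4/d^2) * exp (β₀*|Z ω|) := by
            apply mul_le_mul_of_nonneg_left _ (by positivity)
            rw [h4]; exact h5
    linarith
  have key : ∫ ω, exp (t * Z ω) ∂μ ≤ 1 + t^2 * (4/d^2) * M := by
    have hmono := integral_mono_of_nonneg (Filter.Eventually.of_forall fun ω => (exp_pos _).le) hg
      (Filter.Eventually.of_forall hpt)
    calc ∫ ω, exp (t * Z ω) ∂μ
        ≤ ∫ ω, (1 + t * Z ω + t^2 * (4/d^2) * exp (β₀*|Z ω|)) ∂μ := hmono
      _ = 1 + t * (∫ ω, Z ω ∂μ) + t^2 * (4/d^2) * M := by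
          have i1 : Integrable (fun ω => 1 + t * Z ω) μ := by
            simpa using (integrable_const (1:ℝ)).add (hint.const_mul t)
          have i2 : Integrable (fun ω => t ^ 2 * (4/d^2) * exp (β₀*|Z ω|)) μ := hexp.const_mul _
          have i3 : Integrable (fun ω => t * Z ω) μ := hint.const_mul t
          rw [integral_add i1 i2, integral_add (integrable_const 1) i3, integral_const,
            integral_const_mul, integral_const_mul]
          simp [hM]
      _ = 1 + t^2 * (4/d^2) * M := by rw [hmean]; ring
  have hM0 : 0 ≤ M := integral_nonneg fun ω => (exp_pos _).le
  calc ∫ ω, exp (t * Z ω) ∂μ ≤ 1 + t^2 * (4/d^2) * M := key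
    _ ≤ exp (t^2 * (4/d^2 * M)) := by
        have := add_one_le_exp (t^2 * (4/d^2 * M)); nlinarith

private theorem lemJensen (n : ℕ) (w a : ℕ → ℝ) (h0 : ∀ k, 0 ≤ w k)
    (h1 : ∑ k ∈ Finset.range n, w k ≤ 1) :
    exp (∑ k ∈ Finset.range n, w k * a k) ≤
      (1 - ∑ k ∈ Finset.range n, w k) + ∑ k ∈ Finset.range n, w k * exp (a k) := by
  have h := convexOn_exp.map_add_sum_le (t := Finset.range n) (w := w) (p := a)
    (v := 1 - ∑ k ∈ Finset.range n, w k) (q := 0)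
    (fun i _ => h0 i) (by ring) (fun i _ => Set.mem_univ _) (by linarith) (Set.mem_univ _)
  simpa [smul_eq_mul] using h

private theorem lemTrans {Ω : Type*} [MeasurableSpace Ω] (μ : Measure Ω) (f g : Ω → ℝ)
    (hf : Measurable f) (hg : Measurable g) (hmap : Measure.map f μ = Measure.map g μ) (t : ℝ) :
    (∫ ω, exp (t * f ω) ∂μ = ∫ ω, exp (t * g ω) ∂μ) ∧
      (Integrable (fun ω => exp (t * f ω)) μ ↔ Integrable (fun ω => exp (t * g ω)) μ) := by
  have hφ : Measurable fun x : ℝ => exp (t * x) := (measurable_id.const_mul t).exp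
  constructor
  · have h1 := integral_map (μ := μ) hf.aemeasurable
      (hφ.aestronglyMeasurable (μ := Measure.map f μ))
    have h2 := integral_map (μ := μ) hg.aemeasurable
      (hφ.aestronglyMeasurable (μ := Measure.map g μ))
    rw [hmap] at h1
    exact h1.symm.trans h2
  · have i1 := integrable_map_measure (μ := μ)
      (hφ.aestronglyMeasurable (μ := Measure.map f μ)) hf.aemeasurable
    have i2 := integrable_map_measure (μ := μ)
      (hφ.aestronglyMeasurable (μ := Measure.map g μ)) hg.aemeasurable
    rw [hmap] at i1
    exact i1.symm.trans i2

set_option maxHeartbeats 2000000 in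
theorem stmt5 {Ω : Type*} [MeasurableSpace Ω] (μ : Measure Ω) [IsProbabilityMeasure μ]
    (β₀ : ℝ) (hβ₀ : 0 < β₀) (X : ℕ → ℕ → Ω → ℝ)
    (hmeas : ∀ k j, Measurable (X k j))
    (hexp : Integrable (fun ω => Real.exp (β₀ * |X 0 1 ω|)) μ)
    (hint : Integrable (X 0 1) μ) (hmean : ∫ ω, X 0 1 ω ∂μ = 0)
    (hdist : ∀ k j : ℕ, 1 ≤ j → j ≤ 2 ^ k →
      Measure.map (X k j) μ = Measure.map (fun ω => (2 : ℝ) ^ (-(k : ℤ)) * X 0 1 ω) μ)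
    (hindep : ∀ k : ℕ, ProbabilityTheory.iIndepFun
      (fun j : Fin (2 ^ k) => X k ((j : ℕ) + 1)) μ) :
    ∃ Y : Ω → ℝ,
      (∀ᵐ ω ∂μ, Tendsto
        (fun n => ∑ k ∈ Finset.range (n + 1), ∑ j ∈ Finset.Icc 1 (2 ^ k), X k j ω)
        atTop (nhds (Y ω))) ∧
      ∀ β : ℝ, |β| < β₀ / 2 → Integrable (fun ω => Real.exp (β * Y ω)) μ := by
  set X0 : Ω → ℝ := X 0 1 with hX0def
  have hX0m : Measurable X0 := hmeas 0 1
  set M : ℝ := ∫ ω, exp (β₀ * |X0 ω|) ∂μ with hMdef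
  have hM1 : (1:ℝ) ≤ M := by
    rw [hMdef]
    calc (1:ℝ) = ∫ _ω, (1:ℝ) ∂μ := by simp
      _ ≤ ∫ ω, exp (β₀ * |X0 ω|) ∂μ :=
        integral_mono (integrable_const 1) hexp fun ω => one_le_exp (by positivity)
  set T : ℕ → Ω → ℝ := fun k ω => ∑ j ∈ Finset.Icc 1 (2^k), X k j ω with hTdef
  have hTmeas : ∀ k, Measurable (T k) := fun k => Finset.measurable_sum _ fun j _ => hmeas k j
  have hTfin : ∀ k ω, T k ω = ∑ j : Fin (2^k), X k ((j:ℕ)+1) ω := by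
    intro k ω
    show ∑ j ∈ Finset.Icc 1 (2^k), X k j ω = _
    rw [Fin.sum_univ_eq_sum_range (fun j => X k (j+1) ω) (2^k)]
    rw [← Finset.Ico_add_one_right_eq_Icc, Finset.sum_Ico_eq_sum_range]
    simp [add_comm]
  have c_pos : ∀ k : ℕ, (0:ℝ) < (2:ℝ)^(-(k:ℤ)) := fun k => zpow_pos (by norm_num) _
  have c_mul : ∀ k : ℕ, (2:ℝ)^(-(k:ℤ)) * (2:ℝ)^(k:ℕ) = 1 := by
    intro k
    rw [zpow_neg, zpow_natCast]
    exact inv_mul_cancel₀ (by positivity)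
  -- transfer for individual variables
  have hXkj_eq : ∀ (k j : ℕ) (t : ℝ), 1 ≤ j → j ≤ 2^k →
      (∫ ω, exp (t * X k j ω) ∂μ = ∫ ω, exp ((t * (2:ℝ)^(-(k:ℤ))) * X0 ω) ∂μ) ∧
      (Integrable (fun ω => exp (t * X k j ω)) μ ↔
        Integrable (fun ω => exp ((t * (2:ℝ)^(-(k:ℤ))) * X0 ω)) μ) := by
    intro k j t h1 h2
    have hgm : Measurable fun ω => (2:ℝ)^(-(k:ℤ)) * X0 ω := hX0m.const_mul _
    have h := lemTrans μ (X k j) _ (hmeas k j) hgm (hdist k j h1 h2) t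
    have heq : (fun ω => exp (t * ((2:ℝ)^(-(k:ℤ)) * X0 ω)))
        = fun ω => exp ((t * (2:ℝ)^(-(k:ℤ))) * X0 ω) := by
      funext ω; ring_nf
    rw [heq] at h
    exact h
  have hXkj_int : ∀ (k j : ℕ) (t : ℝ), 1 ≤ j → j ≤ 2^k → |t| * (2:ℝ)^(-(k:ℤ)) ≤ β₀ →
      Integrable (fun ω => exp (t * X k j ω)) μ := by
    intro k j t h1 h2 ht
    refine ((hXkj_eq k j t h1 h2).2).2 ?_
    refine lemInt μ β₀ X0 hX0m hexp _ ?_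
    rw [abs_mul, abs_of_pos (c_pos k)]
    exact ht
  have hfin_bounds : ∀ k : ℕ, ∀ i : Fin (2^k), 1 ≤ (i:ℕ)+1 ∧ (i:ℕ)+1 ≤ 2^k := by
    intro k i
    exact ⟨Nat.le_add_left 1 _, Nat.succ_le_of_lt i.isLt⟩
  -- integrability of exp(t * T k)
  have hT_int : ∀ (k : ℕ) (t : ℝ), |t| * (2:ℝ)^(-(k:ℤ)) ≤ β₀ →
      Integrable (fun ω => exp (t * T k ω)) μ := by
    intro k t ht
    have h := (hindep k).integrable_exp_mul_sum (fun i => hmeas k ((i:ℕ)+1))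
      (s := Finset.univ) (fun i _ =>
        hXkj_int k ((i:ℕ)+1) t (hfin_bounds k i).1 (hfin_bounds k i).2 ht)
    refine h.congr (Filter.Eventually.of_forall fun ω => ?_)
    show exp (t * (∑ i : Fin (2^k), X k ((i:ℕ)+1)) ω) = exp (t * T k ω)
    rw [Finset.sum_apply, hTfin k ω]
  -- mgf of T k
  have hT_mgf : ∀ (k : ℕ) (t : ℝ),
      ∫ ω, exp (t * T k ω) ∂μ = (∫ ω, exp ((t * (2:ℝ)^(-(k:ℤ))) * X0 ω) ∂μ)^(2^k) := by
    intro k t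
    have h := (hindep k).mgf_sum (fun i => hmeas k ((i:ℕ)+1)) Finset.univ (t := t)
    simp only [ProbabilityTheory.mgf] at h
    have hL : ∫ ω, exp (t * T k ω) ∂μ
        = ∫ ω, exp (t * (∑ i : Fin (2^k), X k ((i:ℕ)+1)) ω) ∂μ := by
      apply integral_congr_ae (Filter.Eventually.of_forall fun ω => ?_)
      show exp (t * T k ω) = exp (t * (∑ i : Fin (2^k), X k ((i:ℕ)+1)) ω)
      rw [Finset.sum_apply, hTfin k ω]
    rw [hL, h]
    have hprod := Finset.prod_congr rfl fun (i : Fin (2^k)) (_ : i ∈ Finset.univ) =>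
      (hXkj_eq k (i.val+1) t (hfin_bounds k i).1 (hfin_bounds k i).2).1
    rw [hprod, Finset.prod_const, Finset.card_univ, Fintype.card_fin]
  -- quadratic mgf bound for T k
  have hck : ∀ k : ℕ, ((2:ℝ)^(-(k:ℤ)))^2 * (2:ℝ)^(k:ℕ) = (2:ℝ)^(-(k:ℤ)) := by
    intro k
    rw [sq, mul_assoc, c_mul k, mul_one]
  have hT_quad : ∀ (d t : ℝ) (k : ℕ), 0 < d → |t| * (2:ℝ)^(-(k:ℤ)) + d ≤ β₀ →
      ∫ ω, exp (t * T k ω) ∂μ ≤ exp ((4/d^2*M) * (t^2 * (2:ℝ)^(-(k:ℤ)))) := by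
    intro d t k hd htd
    rw [hT_mgf k t]
    have hs : |t * (2:ℝ)^(-(k:ℤ))| = |t| * (2:ℝ)^(-(k:ℤ)) := by
      rw [abs_mul, abs_of_pos (c_pos k)]
    have hq := lemQuad μ β₀ X0 hX0m hexp hint hmean (t * (2:ℝ)^(-(k:ℤ))) d hd
      (by rw [hs]; exact htd)
    rw [← hMdef] at hq
    have h0 : 0 ≤ ∫ ω, exp ((t * (2:ℝ)^(-(k:ℤ))) * X0 ω) ∂μ :=
      integral_nonneg fun ω => (exp_pos _).le
    calc (∫ ω, exp ((t * (2:ℝ)^(-(k:ℤ))) * X0 ω) ∂μ)^(2^k)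
        ≤ (exp ((t * (2:ℝ)^(-(k:ℤ)))^2 * (4/d^2 * M)))^(2^k) := pow_le_pow_left₀ h0 hq _
      _ = exp ((2^k : ℕ) * ((t * (2:ℝ)^(-(k:ℤ)))^2 * (4/d^2 * M))) := (exp_nat_mul _ _).symm
      _ = exp ((4/d^2*M) * (t^2 * (2:ℝ)^(-(k:ℤ)))) := by
          congr 1
          have hcast : ((2^k : ℕ) : ℝ) = (2:ℝ)^(k:ℕ) := by push_cast; ring
          rw [hcast]
          linear_combination (4/d^2*M) * t^2 * hck k
  -- absolute-value version
  have hT_abs : ∀ (d t : ℝ) (k : ℕ), 0 < d → 0 ≤ t → t * (2:ℝ)^(-(k:ℤ)) + d ≤ β₀ →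
      Integrable (fun ω => exp (t * |T k ω|)) μ ∧
      ∫ ω, exp (t * |T k ω|) ∂μ ≤ 2 * exp ((4/d^2*M) * (t^2 * (2:ℝ)^(-(k:ℤ)))) := by
    intro d t k hd ht0 htd
    have habs : |t| * (2:ℝ)^(-(k:ℤ)) ≤ β₀ := by
      rw [abs_of_nonneg ht0]; linarith
    have habs' : |(-t)| * (2:ℝ)^(-(k:ℤ)) ≤ β₀ := by rwa [abs_neg]
    have i1 : Integrable (fun ω => exp (t * T k ω)) μ := hT_int k t habs
    have i2 : Integrable (fun ω => exp (-t * T k ω)) μ := hT_int k (-t) habs'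
    have hpt : ∀ ω, exp (t * |T k ω|) ≤ exp (t * T k ω) + exp (-t * T k ω) := by
      intro ω
      rcases abs_cases (T k ω) with ⟨h, _⟩ | ⟨h, _⟩
      · rw [h]; nlinarith [exp_pos (-t * T k ω)]
      · rw [h]
        have : t * -T k ω = -t * T k ω := by ring
        rw [this]
        nlinarith [exp_pos (t * T k ω)]
    have hi : Integrable (fun ω => exp (t * |T k ω|)) μ := by
      refine (i1.add i2).mono' (((hTmeas k).abs.const_mul t).exp.aestronglyMeasurable)
        (Filter.Eventually.of_forall fun ω => ?_)
      rw [Real.norm_eq_abs, abs_of_pos (exp_pos _)]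
      exact hpt ω
    refine ⟨hi, ?_⟩
    have hq1 := hT_quad d t k hd (by rwa [abs_of_nonneg ht0])
    have hq2 := hT_quad d (-t) k hd (by rwa [abs_neg, abs_of_nonneg ht0])
    rw [neg_sq] at hq2
    calc ∫ ω, exp (t * |T k ω|) ∂μ
        ≤ ∫ ω, (exp (t * T k ω) + exp (-t * T k ω)) ∂μ :=
          integral_mono hi (i1.add i2) hpt
      _ = (∫ ω, exp (t * T k ω) ∂μ) + ∫ ω, exp (-t * T k ω) ∂μ := integral_add i1 i2
      _ ≤ 2 * exp ((4/d^2*M) * (t^2 * (2:ℝ)^(-(k:ℤ)))) := by linarith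
  -- geometric L¹ decay of level sums
  set A : ℝ := 4/(β₀/2)^2*M with hAdef
  set st : ℝ := Real.sqrt 2 with hstdef
  have hst0 : 0 < st := Real.sqrt_pos.2 (by norm_num)
  have hstsq : st^2 = 2 := Real.sq_sqrt (by norm_num)
  have hst1 : 1 < st := by nlinarith
  have hst2 : st ≤ 2 := by nlinarith
  set C₁ : ℝ := 4 * exp (A*((β₀/2)^2)) / β₀ with hC₁def
  have key : ∀ k, Integrable (T k) μ ∧ ∫ ω, |T k ω| ∂μ ≤ C₁ * (st⁻¹)^k := by
    intro k
    set t : ℝ := (β₀/2) * st^k with htdef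
    have hstk : 0 < st^k := pow_pos hst0 k
    have ht_pos : 0 < t := by positivity
    have hpow : st^k ≤ (2:ℝ)^k := pow_le_pow_left₀ hst0.le hst2 k
    have hc := c_pos k
    have hcm := c_mul k
    have h1 : st^k * (2:ℝ)^(-(k:ℤ)) ≤ 1 := by
      calc st^k * (2:ℝ)^(-(k:ℤ)) ≤ (2:ℝ)^(k:ℕ) * (2:ℝ)^(-(k:ℤ)) :=
            mul_le_mul_of_nonneg_right hpow hc.le
        _ = 1 := by rw [mul_comm]; exact hcm
    have htd : t * (2:ℝ)^(-(k:ℤ)) + β₀/2 ≤ β₀ := by nlinarith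
    have habs := hT_abs (β₀/2) t k (by positivity) ht_pos.le htd
    have hexpo : t^2 * (2:ℝ)^(-(k:ℤ)) = (β₀/2)^2 := by
      have h2 : (st^k)^2 = (2:ℝ)^(k:ℕ) := by
        rw [← pow_mul, mul_comm k 2, pow_mul, hstsq]
      calc t^2 * (2:ℝ)^(-(k:ℤ)) = (β₀/2)^2 * ((st^k)^2 * (2:ℝ)^(-(k:ℤ))) := by
            rw [htdef]; ring
        _ = (β₀/2)^2 := by rw [h2, mul_comm ((2:ℝ)^(k:ℕ)) _, hcm, mul_one]
    rw [hexpo] at habs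
    have hptabs : ∀ ω, |T k ω| ≤ exp (t * |T k ω|) / t := by
      intro ω
      rw [le_div_iff₀ ht_pos]
      nlinarith [add_one_le_exp (t * |T k ω|), exp_pos (t * |T k ω|)]
    have hTk_int : Integrable (T k) μ := by
      refine (habs.1.div_const t).mono' (hTmeas k).aestronglyMeasurable
        (Filter.Eventually.of_forall fun ω => ?_)
      rw [Real.norm_eq_abs]
      exact hptabs ω
    refine ⟨hTk_int, ?_⟩
    have h4 : ∫ ω, |T k ω| ∂μ ≤ (∫ ω, exp (t * |T k ω|) ∂μ) / t := by
      have := integral_div t (fun ω => exp (t * |T k ω|)) (μ := μ)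
      rw [← integral_div]
      exact integral_mono hTk_int.abs (habs.1.div_const t) hptabs
    have h5 : (2 * exp (A*((β₀/2)^2))) / t = C₁ * (st⁻¹)^k := by
      rw [hC₁def, htdef, inv_pow]
      field_simp
      ring
    calc ∫ ω, |T k ω| ∂μ ≤ (∫ ω, exp (t * |T k ω|) ∂μ) / t := h4
      _ ≤ (2 * exp (A*((β₀/2)^2))) / t := by gcongr; exact habs.2
      _ = C₁ * (st⁻¹)^k := h5
  have hinv1 : st⁻¹ < 1 := by rw [inv_lt_one₀ hst0]; exact hst1
  have hsummable : Summable (fun k => C₁ * (st⁻¹)^k) :=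
    (summable_geometric_of_lt_one (by positivity) hinv1).mul_left _
  have hC₁pos : 0 < C₁ := by rw [hC₁def]; positivity
  -- a.e. summability
  have hmeasnn : ∀ k, Measurable fun ω => (‖T k ω‖₊ : ENNReal) := fun k => (hTmeas k).nnnorm.coe_nnreal_ennreal
  have h5 : ∫⁻ ω, ∑' k, (‖T k ω‖₊ : ENNReal) ∂μ = ∑' k, ∫⁻ ω, (‖T k ω‖₊ : ENNReal) ∂μ :=
    lintegral_tsum fun k => (hmeasnn k).aemeasurable
  have h6 : ∀ k, ∫⁻ ω, (‖T k ω‖₊ : ENNReal) ∂μ = ENNReal.ofReal (∫ ω, ‖T k ω‖ ∂μ) :=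
    fun k => (ofReal_integral_norm_eq_lintegral_enorm (key k).1).symm
  have h7 : ∑' k, ∫⁻ ω, (‖T k ω‖₊ : ENNReal) ∂μ ≤ ENNReal.ofReal (∑' k, C₁ * (st⁻¹)^k) := by
    rw [ENNReal.ofReal_tsum_of_nonneg (fun k => by positivity) hsummable]
    refine ENNReal.tsum_le_tsum fun k => ?_
    rw [h6 k]
    refine ENNReal.ofReal_le_ofReal ?_
    simpa [Real.norm_eq_abs] using (key k).2
  have h8 : ∫⁻ ω, ∑' k, (‖T k ω‖₊ : ENNReal) ∂μ < ⊤ := by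
    rw [h5]; exact lt_of_le_of_lt h7 ENNReal.ofReal_lt_top
  have hae : ∀ᵐ ω ∂μ, Summable fun k => ‖T k ω‖ := by
    filter_upwards [ae_lt_top (Measurable.ennreal_tsum hmeasnn) h8.ne] with ω hω
    have hs := ENNReal.tsum_coe_ne_top_iff_summable.1 hω.ne
    have hs2 := NNReal.summable_coe.2 hs
    simpa [coe_nnnorm] using hs2
  set Y : Ω → ℝ := fun ω => ∑' k, T k ω with hYdef
  refine ⟨Y, ?_, ?_⟩
  · filter_upwards [hae] with ω hω
    have hsum : Summable fun k => T k ω := hω.of_norm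
    exact hsum.hasSum.tendsto_sum_nat.comp (tendsto_add_atTop_nat 1)
  · -- exponential integrability of the limit
    intro β hβ
    have htendsae : ∀ᵐ ω ∂μ, Tendsto (fun n => ∑ k ∈ Finset.range n, T k ω) atTop (nhds (Y ω)) := by
      filter_upwards [hae] with ω hω
      exact hω.of_norm.hasSum.tendsto_sum_nat
    set b : ℝ := |β| with hbdef
    have hb0 : 0 ≤ b := abs_nonneg β
    have hb : b < β₀/2 := hβ
    set t₁ : ℝ := (2*b + β₀)/2 with ht₁def
    have ht₁pos : 0 < t₁ := by rw [ht₁def]; linarith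
    set d₂ : ℝ := β₀ - t₁ with hd₂def
    have hd₂ : 0 < d₂ := by rw [hd₂def, ht₁def]; linarith
    set K : ℝ := 4/d₂^2*M with hKdef
    have hM0 : 0 < M := by linarith
    have hK0 : 0 < K := by rw [hKdef]; positivity
    set θ : ℝ := b / t₁ with hθdef
    have hθ0 : 0 ≤ θ := by rw [hθdef]; positivity
    have h2bt : 2*b < t₁ := by rw [ht₁def]; linarith
    have hθhalf : 2*θ < 1 := by
      rw [hθdef, mul_div_assoc']
      exact (div_lt_one ht₁pos).2 h2bt
    set δ : ℝ := 1 - 2*θ with hδdef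
    have hδ : 0 < δ := by rw [hδdef]; linarith
    have hsinv0 : 0 < st⁻¹ := by positivity
    have h1s : 0 < 1 - st⁻¹ := by linarith [hinv1]
    set lam : ℕ → ℝ := fun k => θ * (1/2:ℝ)^k + δ*(1-st⁻¹)*(st⁻¹)^k with hlamdef
    have hlampos : ∀ k, 0 < lam k := by
      intro k
      have h1 : 0 ≤ θ * (1/2:ℝ)^k := by positivity
      have h2 : 0 < δ*(1-st⁻¹)*(st⁻¹)^k := by positivity
      rw [hlamdef]; dsimp only; linarith
    have hhalf : ∀ k : ℕ, ((1:ℝ)/2)^k = (2:ℝ)^(-(k:ℤ)) := by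
      intro k
      rw [zpow_neg, zpow_natCast, div_pow, one_pow, one_div]
    have hlamsum : ∀ n, ∑ k ∈ Finset.range n, lam k ≤ 1 := by
      intro n
      have g1 : ∑ k ∈ Finset.range n, ((1:ℝ)/2)^k ≤ 2 := by
        have hsg : Summable fun k : ℕ => ((1:ℝ)/2)^k :=
          summable_geometric_of_lt_one (by norm_num) (by norm_num)
        have := Summable.sum_le_tsum (Finset.range n) (fun k _ => by positivity) hsg
        rw [tsum_geometric_of_lt_one (by norm_num) (by norm_num)] at this
        norm_num at this
        linarith
      have g2 : ∑ k ∈ Finset.range n, (st⁻¹)^k ≤ (1-st⁻¹)⁻¹ := by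
        have hsg : Summable fun k : ℕ => (st⁻¹)^k :=
          summable_geometric_of_lt_one hsinv0.le hinv1
        have := Summable.sum_le_tsum (Finset.range n) (fun k _ => by positivity) hsg
        rwa [tsum_geometric_of_lt_one hsinv0.le hinv1] at this
      have hsplit : ∑ k ∈ Finset.range n, lam k
          = θ * (∑ k ∈ Finset.range n, ((1:ℝ)/2)^k)
            + δ*(1-st⁻¹) * (∑ k ∈ Finset.range n, (st⁻¹)^k) := by
        rw [Finset.mul_sum, Finset.mul_sum, ← Finset.sum_add_distrib]
      have hterm2 : δ*(1-st⁻¹) * (∑ k ∈ Finset.range n, (st⁻¹)^k) ≤ δ := by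
        calc δ*(1-st⁻¹) * (∑ k ∈ Finset.range n, (st⁻¹)^k)
            ≤ δ*(1-st⁻¹) * (1-st⁻¹)⁻¹ := by
              apply mul_le_mul_of_nonneg_left g2 (by positivity)
          _ = δ := by rw [mul_assoc, mul_inv_cancel₀ h1s.ne', mul_one]
      have hterm1 : θ * (∑ k ∈ Finset.range n, ((1:ℝ)/2)^k) ≤ θ * 2 :=
        mul_le_mul_of_nonneg_left g1 hθ0
      rw [hsplit]
      linarith [hterm1, hterm2]
    set e : ℝ := δ*(1-st⁻¹) with hedef
    have he : 0 < e := by rw [hedef]; positivity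
    set Q : ℝ := K * ((b/e)^2) with hQdef
    have hperk : ∀ k, Integrable (fun ω => exp ((b/lam k) * |T k ω|)) μ ∧
        ∫ ω, exp ((b/lam k) * |T k ω|) ∂μ ≤ 2 * exp Q := by
      intro k
      have hl := hlampos k
      have hlb1 : θ * (1/2:ℝ)^k ≤ lam k := by
        rw [hlamdef]; dsimp only
        have : 0 ≤ e*(st⁻¹)^k := by positivity
        linarith
      have hlb2 : e*(st⁻¹)^k ≤ lam k := by
        rw [hlamdef, hedef]; dsimp only
        have : 0 ≤ θ * (1/2:ℝ)^k := by positivity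
        linarith
      have hbt : t₁ * θ = b := by rw [hθdef]; field_simp
      have hcon : (b/lam k) * (2:ℝ)^(-(k:ℤ)) ≤ t₁ := by
        rw [div_mul_eq_mul_div, div_le_iff₀ hl]
        calc b * (2:ℝ)^(-(k:ℤ)) = t₁ * (θ * ((1:ℝ)/2)^k) := by
              rw [hhalf k, ← hbt]; ring
          _ ≤ t₁ * lam k := mul_le_mul_of_nonneg_left hlb1 ht₁pos.le
      have htd : (b/lam k) * (2:ℝ)^(-(k:ℤ)) + d₂ ≤ β₀ := by
        rw [hd₂def]; linarith
      have habs := hT_abs d₂ (b/lam k) k hd₂ (by positivity) htd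
      refine ⟨habs.1, habs.2.trans ?_⟩
      have hsq : ((st⁻¹)^k)^2 = ((1:ℝ)/2)^k := by
        rw [← pow_mul, mul_comm k 2, pow_mul, inv_pow, hstsq]
        norm_num
      have hexp2 : (b/lam k)^2 * (2:ℝ)^(-(k:ℤ)) ≤ (b/e)^2 := by
        have hstk : 0 < (st⁻¹)^k := by positivity
        have hdivle : b/lam k ≤ b/(e*(st⁻¹)^k) := by
          apply div_le_div_of_nonneg_left hb0 (by positivity) hlb2
        have hsqle : (b/lam k)^2 ≤ (b/(e*(st⁻¹)^k))^2 :=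
          pow_le_pow_left₀ (by positivity) hdivle 2
        have heq : (b/(e*(st⁻¹)^k))^2 * ((1:ℝ)/2)^k = (b/e)^2 := by
          rw [← hsq]
          field_simp
        calc (b/lam k)^2 * (2:ℝ)^(-(k:ℤ))
            ≤ (b/(e*(st⁻¹)^k))^2 * (2:ℝ)^(-(k:ℤ)) := by
              apply mul_le_mul_of_nonneg_right hsqle (c_pos k).le
          _ = (b/e)^2 := by rw [← hhalf k]; exact heq
      have : K * ((b/lam k)^2 * (2:ℝ)^(-(k:ℤ))) ≤ Q := by
        rw [hQdef]
        exact mul_le_mul_of_nonneg_left hexp2 hK0.le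
      have := exp_le_exp.2 this
      linarith
    set B : ℝ := 1 + 2*exp Q with hBdef
    have hunif : ∀ n, Integrable (fun ω => exp (b * ∑ k ∈ Finset.range n, |T k ω|)) μ ∧
        ∫ ω, exp (b * ∑ k ∈ Finset.range n, |T k ω|) ∂μ ≤ B := by
      intro n
      have hjen : ∀ ω, exp (b * ∑ k ∈ Finset.range n, |T k ω|)
          ≤ (1 - ∑ k ∈ Finset.range n, lam k)
            + ∑ k ∈ Finset.range n, lam k * exp ((b/lam k) * |T k ω|) := by
        intro ω
        have h := lemJensen n lam (fun k => (b/lam k) * |T k ω|)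
          (fun k => (hlampos k).le) (hlamsum n)
        have harg : ∑ k ∈ Finset.range n, lam k * ((b/lam k) * |T k ω|)
            = b * ∑ k ∈ Finset.range n, |T k ω| := by
          rw [Finset.mul_sum]
          refine Finset.sum_congr rfl fun k _ => ?_
          have := (hlampos k).ne'
          field_simp
        rw [harg] at h
        exact h
      have hgint : Integrable (fun ω => (1 - ∑ k ∈ Finset.range n, lam k)
          + ∑ k ∈ Finset.range n, lam k * exp ((b/lam k) * |T k ω|)) μ := by
        apply (integrable_const _).add
        apply integrable_finset_sum
        intro k _
        exact ((hperk k).1.const_mul _)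
      have hmeasb : Measurable fun ω => exp (b * ∑ k ∈ Finset.range n, |T k ω|) :=
        ((Finset.measurable_sum _ fun k _ => (hTmeas k).abs).const_mul b).exp
      have hintb : Integrable (fun ω => exp (b * ∑ k ∈ Finset.range n, |T k ω|)) μ := by
        refine hgint.mono' hmeasb.aestronglyMeasurable (Filter.Eventually.of_forall fun ω => ?_)
        rw [Real.norm_eq_abs, abs_of_pos (exp_pos _)]
        exact hjen ω
      refine ⟨hintb, ?_⟩
      have hlamnn : 0 ≤ ∑ k ∈ Finset.range n, lam k :=
        Finset.sum_nonneg fun k _ => (hlampos k).le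
      have hs1 : ∑ k ∈ Finset.range n, lam k * ∫ ω, exp ((b/lam k) * |T k ω|) ∂μ
          ≤ (∑ k ∈ Finset.range n, lam k) * (2*exp Q) := by
        rw [Finset.sum_mul]
        exact Finset.sum_le_sum fun k _ =>
          mul_le_mul_of_nonneg_left (hperk k).2 (hlampos k).le
      calc ∫ ω, exp (b * ∑ k ∈ Finset.range n, |T k ω|) ∂μ
          ≤ ∫ ω, ((1 - ∑ k ∈ Finset.range n, lam k)
            + ∑ k ∈ Finset.range n, lam k * exp ((b/lam k) * |T k ω|)) ∂μ :=
            integral_mono hintb hgint hjen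
        _ = (1 - ∑ k ∈ Finset.range n, lam k)
            + ∑ k ∈ Finset.range n, lam k * ∫ ω, exp ((b/lam k) * |T k ω|) ∂μ := by
            rw [integral_add (integrable_const _)
              (integrable_finset_sum _ fun k _ => ((hperk k).1.const_mul _)),
              integral_const, integral_finset_sum _ fun k _ => ((hperk k).1.const_mul _)]
            simp only [probReal_univ, measure_univ, ENNReal.toReal_one, smul_eq_mul, one_mul]
            congr 1
            exact Finset.sum_congr rfl fun k _ => integral_const_mul _ _
        _ ≤ B := by
            rw [hBdef]
            have h2q : 0 < 2*exp Q := by positivity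
            nlinarith [hlamsum n]
    -- measurability of Y
    have hYmeas : AEStronglyMeasurable Y μ := by
      refine aestronglyMeasurable_of_tendsto_ae atTop
        (fun n => ?_) htendsae
      exact (Finset.measurable_sum _ fun k _ => hTmeas k).aestronglyMeasurable
    have hexpYmeas : AEStronglyMeasurable (fun ω => exp (β * Y ω)) μ :=
      Real.continuous_exp.comp_aestronglyMeasurable (hYmeas.const_mul β)
    -- Fatou argument
    set gn : ℕ → Ω → ENNReal :=
      fun n ω => ENNReal.ofReal (exp (b * ∑ k ∈ Finset.range n, |T k ω|)) with hgndef
    have hgnm : ∀ n, Measurable (gn n) := fun n =>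
      ((Finset.measurable_sum _ fun k _ => (hTmeas k).abs).const_mul b).exp.ennreal_ofReal
    have hgnb : ∀ n, ∫⁻ ω, gn n ω ∂μ ≤ ENNReal.ofReal B := by
      intro n
      rw [hgndef]
      dsimp only
      rw [← ofReal_integral_eq_lintegral_ofReal (hunif n).1
        (Filter.Eventually.of_forall fun ω => (exp_pos _).le)]
      exact ENNReal.ofReal_le_ofReal (hunif n).2
    have hfatou : ∫⁻ ω, liminf (fun n => gn n ω) atTop ∂μ ≤ ENNReal.ofReal B := by
      refine le_trans (lintegral_liminf_le hgnm) ?_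
      calc liminf (fun n => ∫⁻ ω, gn n ω ∂μ) atTop
          ≤ liminf (fun _ => ENNReal.ofReal B) atTop :=
            Filter.liminf_le_liminf (Filter.Eventually.of_forall hgnb)
        _ = ENNReal.ofReal B := Filter.liminf_const _
    have haeb : ∀ᵐ ω ∂μ, ENNReal.ofReal (exp (β * Y ω)) ≤ liminf (fun n => gn n ω) atTop := by
      filter_upwards [hae] with ω hω
      have habs_sum : Summable fun k => |T k ω| := by
        simpa [Real.norm_eq_abs] using hω
      have hY : |Y ω| ≤ ∑' k, |T k ω| := by
        have h := norm_tsum_le_tsum_norm hω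
        simpa [Real.norm_eq_abs] using h
      have hβY : β * Y ω ≤ b * ∑' k, |T k ω| := by
        calc β * Y ω ≤ |β * Y ω| := le_abs_self _
          _ = b * |Y ω| := by rw [abs_mul]
          _ ≤ b * ∑' k, |T k ω| := mul_le_mul_of_nonneg_left hY hb0
      have h1 : Tendsto (fun n => ∑ k ∈ Finset.range n, |T k ω|) atTop
          (nhds (∑' k, |T k ω|)) := habs_sum.hasSum.tendsto_sum_nat
      have htend : Tendsto (fun n => gn n ω) atTop
          (nhds (ENNReal.ofReal (exp (b * ∑' k, |T k ω|)))) := by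
        exact (ENNReal.continuous_ofReal.tendsto _).comp
          ((Real.continuous_exp.tendsto _).comp (h1.const_mul b))
      rw [htend.liminf_eq]
      exact ENNReal.ofReal_le_ofReal (exp_le_exp.2 hβY)
    refine ⟨hexpYmeas, ?_⟩
    have hfin : ∫⁻ ω, (‖exp (β * Y ω)‖₊ : ENNReal) ∂μ ≤ ENNReal.ofReal B := by
      calc ∫⁻ ω, (‖exp (β * Y ω)‖₊ : ENNReal) ∂μ
          = ∫⁻ ω, ENNReal.ofReal (exp (β * Y ω)) ∂μ :=
            lintegral_congr fun ω => Real.enorm_eq_ofReal (exp_pos _).le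
        _ ≤ ∫⁻ ω, liminf (fun n => gn n ω) atTop ∂μ := lintegral_mono_ae haeb
        _ ≤ ENNReal.ofReal B := hfatou
    exact hfin.trans_lt ENNReal.ofReal_lt_top
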